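/- Fix α ∈ (0,1) and let c = c_{α/2} be the upper α/2 quantile of the standard normal distribution. Define Q(ρ) = 4 − 8Φ(c) + 2Φ_ρ(c,c) + 2Φ_{−ρ}(c,c) for ρ ∈ (−1,1), where Φ_ρ is the CDF of the standard bivariate normal with correlation ρ. Then Q is strictly increasing on (0,1): for 0 < ρ_1 < ρ_2 < 1 one has Q(ρ_1) < Q(ρ_2). -/

import Mathlib

open MeasureTheory ProbabilityTheory

/-- The standard normal cumulative distribution function `Φ`. -/
noncomputable def stdCDF (x : ℝ) : ℝ :=
  ∫ t in Set.Iic x, (Real.sqrt (2 * Real.pi))⁻¹ * Real.exp (-t ^ 2 / 2)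

/-- The CDF `Φ_ρ(x, y)` of the standard bivariate normal distribution with correlation `ρ`. -/
noncomputable def bivCDF (ρ x y : ℝ) : ℝ :=
  ∫ u in Set.Iic x, ∫ v in Set.Iic y,
    (2 * Real.pi * Real.sqrt (1 - ρ ^ 2))⁻¹ *
      Real.exp (-(u ^ 2 - 2 * ρ * u * v + v ^ 2) / (2 * (1 - ρ ^ 2)))

open Real Set Filter Topology


noncomputable def bf (ρ u v : ℝ) : ℝ :=
  (2 * π * Real.sqrt (1 - ρ^2))⁻¹ * Real.exp (-(u^2 - 2*ρ*u*v + v^2) / (2*(1-ρ^2)))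

noncomputable def bfu (ρ u v : ℝ) : ℝ := bf ρ u v * ((ρ*v - u)/(1-ρ^2))

noncomputable def bD (ρ u v : ℝ) : ℝ :=
  bf ρ u v * (((ρ*u - v)*(ρ*v - u) + ρ*(1-ρ^2))/(1-ρ^2)^2)

lemma hasDerivAt_congr' {f g : ℝ → ℝ} {d d' x : ℝ} (h : HasDerivAt f d x)
    (hfg : ∀ y, f y = g y) (hd : d = d') : HasDerivAt g d' x := by
  rw [← hd, ← funext hfg]; exact h

lemma bf_pos {ρ : ℝ} (h : ρ^2 < 1) (u v : ℝ) : 0 < bf ρ u v := by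
  have hs : (0:ℝ) < 1 - ρ^2 := by linarith
  have : 0 < Real.sqrt (1 - ρ^2) := Real.sqrt_pos.2 hs
  unfold bf
  positivity

-- L3 : derivative of bf in u
lemma hasDerivAt_bf_u {ρ : ℝ} (h : ρ^2 < 1) (u v : ℝ) :
    HasDerivAt (fun u' => bf ρ u' v) (bfu ρ u v) u := by
  have hs : (0:ℝ) < 1 - ρ^2 := by linarith
  have hA : HasDerivAt (fun u' : ℝ => -(u'^2 - 2*ρ*u'*v + v^2) / (2*(1-ρ^2)))
      ((ρ*v - u)/(1-ρ^2)) u := by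
    have h2 : HasDerivAt (fun u' : ℝ => u' * (2*ρ*v) - u'^2 - v^2) (2*ρ*v - 2*u) u := by
      have := (((hasDerivAt_id u).mul_const (2*ρ*v)).sub (hasDerivAt_pow 2 u)).sub_const (v^2)
      exact hasDerivAt_congr' this (fun y => rfl) (by push_cast; ring)
    exact hasDerivAt_congr' (h2.div_const (2*(1-ρ^2)))
      (fun y => by ring) (by field_simp)
  have := (hA.exp).const_mul ((2 * π * Real.sqrt (1 - ρ^2))⁻¹)
  exact hasDerivAt_congr' this (fun y => rfl) (by unfold bfu bf; ring)

-- L2 : derivative of bfu in v is bD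
lemma hasDerivAt_bfu_v {ρ : ℝ} (h : ρ^2 < 1) (u v : ℝ) :
    HasDerivAt (fun v' => bfu ρ u v') (bD ρ u v) v := by
  have hs : (0:ℝ) < 1 - ρ^2 := by linarith
  have hA : HasDerivAt (fun v' : ℝ => -(u^2 - 2*ρ*u*v' + v'^2) / (2*(1-ρ^2)))
      ((ρ*u - v)/(1-ρ^2)) v := by
    have h2 : HasDerivAt (fun v' : ℝ => v' * (2*ρ*u) - v'^2 - u^2) (2*ρ*u - 2*v) v := by
      have := (((hasDerivAt_id v).mul_const (2*ρ*u)).sub (hasDerivAt_pow 2 v)).sub_const (u^2)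
      exact hasDerivAt_congr' this (fun y => rfl) (by push_cast; ring)
    exact hasDerivAt_congr' (h2.div_const (2*(1-ρ^2)))
      (fun y => by ring) (by field_simp)
  have hf : HasDerivAt (fun v' => bf ρ u v') (bf ρ u v * ((ρ*u - v)/(1-ρ^2))) v := by
    have := (hA.exp).const_mul ((2 * π * Real.sqrt (1 - ρ^2))⁻¹)
    exact hasDerivAt_congr' this (fun y => rfl) (by unfold bf; ring)
  have hg : HasDerivAt (fun v' : ℝ => (ρ*v' - u)/(1-ρ^2)) (ρ/(1-ρ^2)) v := by
    have h3 : HasDerivAt (fun v' : ℝ => v' * ρ - u) ρ v := by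
      simpa using ((hasDerivAt_id v).mul_const ρ).sub_const u
    exact hasDerivAt_congr' (h3.div_const (1-ρ^2)) (fun y => by ring) rfl
  refine hasDerivAt_congr' (hf.mul hg) (fun y => rfl) ?_
  unfold bD
  field_simp

-- L1 : derivative of bf in ρ is bD
lemma hasDerivAt_bf_rho {ρ : ℝ} (h : ρ^2 < 1) (u v : ℝ) :
    HasDerivAt (fun r => bf r u v) (bD ρ u v) ρ := by
  have hs : (0:ℝ) < 1 - ρ^2 := by linarith
  have hsq : (0:ℝ) < Real.sqrt (1 - ρ^2) := Real.sqrt_pos.2 hs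
  have ht : Real.sqrt (1 - ρ^2) ^ 2 = 1 - ρ^2 := Real.sq_sqrt hs.le
  have h1 : HasDerivAt (fun r : ℝ => Real.sqrt (1 - r^2)) (-ρ / Real.sqrt (1 - ρ^2)) ρ := by
    have hinner : HasDerivAt (fun r : ℝ => 1 - r^2) (-(2*ρ)) ρ := by
      have := (hasDerivAt_pow 2 ρ).const_sub 1
      exact hasDerivAt_congr' this (fun y => rfl) (by push_cast; ring)
    have := (Real.hasDerivAt_sqrt hs.ne').comp ρ hinner
    exact hasDerivAt_congr' this (fun y => rfl) (by field_simp)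
  have h2 : HasDerivAt (fun r : ℝ => (2 * π * Real.sqrt (1 - r^2))⁻¹)
      ((2 * π * Real.sqrt (1 - ρ^2))⁻¹ * (ρ/(1-ρ^2))) ρ := by
    have := (h1.const_mul (2*π)).inv (by positivity)
    refine hasDerivAt_congr' this (fun y => rfl) ?_
    field_simp
    linear_combination (-ρ) * ht
  have h3 : HasDerivAt (fun r : ℝ => -(u^2 - 2*r*u*v + v^2) / (2*(1-r^2)))
      ((u*v*(1-ρ^2) - ρ*(u^2 - 2*ρ*u*v + v^2)) / (1-ρ^2)^2) ρ := by
    have hn : HasDerivAt (fun r : ℝ => -(u^2 - 2*r*u*v + v^2)) (2*u*v) ρ := by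
      have : HasDerivAt (fun r : ℝ => r * (2*u*v) - (u^2+v^2)) (2*u*v) ρ := by
        simpa using ((hasDerivAt_id ρ).mul_const (2*u*v)).sub_const (u^2+v^2)
      exact hasDerivAt_congr' this (fun y => by ring) rfl
    have hd : HasDerivAt (fun r : ℝ => 2*(1-r^2)) (-(4*ρ)) ρ := by
      have hinner : HasDerivAt (fun r : ℝ => 1 - r^2) (-(2*ρ)) ρ := by
        have := (hasDerivAt_pow 2 ρ).const_sub 1
        exact hasDerivAt_congr' this (fun y => rfl) (by push_cast; ring)
      exact hasDerivAt_congr' (hinner.const_mul 2) (fun y => rfl) (by ring)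
    refine hasDerivAt_congr' (hn.div hd (by positivity)) (fun y => rfl) ?_
    field_simp
    ring
  refine hasDerivAt_congr' (h2.mul h3.exp) (fun y => rfl) ?_
  unfold bD bf
  obtain ⟨E, hE⟩ : ∃ E, Real.exp (-(u^2 - 2*ρ*u*v + v^2) / (2*(1-ρ^2))) = E := ⟨_, rfl⟩
  rw [hE, ← ht]
  have ht0 : Real.sqrt (1 - ρ^2) ≠ 0 := hsq.ne'
  field_simp
  linear_combination (E*u*v) * ht

lemma tendsto_linexp_atTop (a b β γ δ : ℝ) (hβ : 0 < β) :
    Tendsto (fun x => (a*x+b) * Real.exp (-β*x^2 + γ*x + δ)) atTop (𝓝 0) := by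
  have hq : Tendsto (fun x : ℝ => x * (β*x - (γ+1)) - δ) atTop atTop := by
    apply tendsto_atTop_add_const_right
    exact tendsto_id.atTop_mul_atTop₀ (tendsto_atTop_add_const_right _ _
      (tendsto_id.const_mul_atTop hβ))
  have h1 : Tendsto (fun x : ℝ => (|a| * x + |b|) * Real.exp (-x)) atTop (𝓝 0) := by
    have ha := (tendsto_pow_mul_exp_neg_atTop_nhds_zero 1).const_mul |a|
    have hb := Real.tendsto_exp_neg_atTop_nhds_zero.const_mul |b|
    have := ha.add hb
    simp only [pow_one, mul_zero, add_zero] at this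
    refine this.congr (fun x => by ring)
  refine squeeze_zero_norm' ?_ h1
  filter_upwards [hq.eventually_ge_atTop 0, eventually_ge_atTop (0:ℝ)] with x hx hx0
  rw [Real.norm_eq_abs, abs_mul, Real.abs_exp]
  gcongr
  · exact (abs_add_le _ _).trans (by rw [abs_mul, abs_of_nonneg hx0])
  · nlinarith

lemma tendsto_linexp_atBot (a b β γ δ : ℝ) (hβ : 0 < β) :
    Tendsto (fun x => (a*x+b) * Real.exp (-β*x^2 + γ*x + δ)) atBot (𝓝 0) := by
  have := (tendsto_linexp_atTop (-a) b β (-γ) δ hβ).comp tendsto_neg_atBot_atTop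
  refine this.congr (fun x => ?_)
  simp only [Function.comp_apply]
  ring_nf
noncomputable def gg (m x : ℝ) : ℝ := (1 + 2*x^2) * Real.exp (-((1-m)/2) * x^2)

lemma gg_pos {m : ℝ} (x : ℝ) : 0 < gg m x := by unfold gg; positivity

lemma integrable_gg {m : ℝ} (hm : m < 1) : Integrable (gg m) := by
  have hτ : 0 < (1-m)/2 := by linarith
  have h1 := integrable_exp_neg_mul_sq hτ
  have h2 : Integrable (fun x : ℝ => x^2 * Real.exp (-((1-m)/2) * x^2)) := by
    have h3 := integrable_rpow_mul_exp_neg_mul_sq hτ (s := 2) (by norm_num)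
    refine h3.congr (Filter.Eventually.of_forall fun x => ?_)
    simp only [show ((2:ℝ)) = ((2:ℕ):ℝ) by norm_num, Real.rpow_natCast]
  exact (h1.add (h2.const_mul 2)).congr (Filter.Eventually.of_forall fun x => by
    simp only [Pi.add_apply]; unfold gg; ring)

lemma qd_lb {m ρ : ℝ} (hρ : |ρ| ≤ m) (u v : ℝ) :
    (1-m)*(u^2+v^2) ≤ u^2 - 2*ρ*u*v + v^2 := by
  obtain ⟨h1, h2⟩ := abs_le.mp hρ
  nlinarith [mul_nonneg (by linarith : (0:ℝ) ≤ m - ρ) (sq_nonneg (u+v)),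
    mul_nonneg (by linarith : (0:ℝ) ≤ m + ρ) (sq_nonneg (u-v))]

lemma bf_le {m ρ : ℝ} (hm : m < 1) (hρ : |ρ| ≤ m) (u v : ℝ) :
    bf ρ u v ≤ (2*π*Real.sqrt (1-m^2))⁻¹ *
      (Real.exp (-((1-m)/2) * u^2) * Real.exp (-((1-m)/2) * v^2)) := by
  have hm0 : 0 ≤ m := (abs_nonneg ρ).trans hρ
  have hρ2 : ρ^2 ≤ m^2 := by nlinarith [abs_le.mp hρ]
  have hsm : (0:ℝ) < 1 - m^2 := by nlinarith
  have hs : (0:ℝ) < 1 - ρ^2 := by nlinarith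
  have hQd : (0:ℝ) ≤ u^2 - 2*ρ*u*v + v^2 := le_trans (by nlinarith) (qd_lb hρ u v)
  unfold bf
  rw [← Real.exp_add]
  have hK : (2*π*Real.sqrt (1-ρ^2))⁻¹ ≤ (2*π*Real.sqrt (1-m^2))⁻¹ := by
    gcongr <;> first
      | positivity
      | exact Real.sqrt_le_sqrt (by linarith)
  have hE : -(u^2 - 2*ρ*u*v + v^2) / (2*(1-ρ^2)) ≤
      -((1-m)/2) * u^2 + -((1-m)/2) * v^2 := by
    have step1 : ((1-m)*(u^2+v^2))/2 ≤ (u^2 - 2*ρ*u*v + v^2)/2 := by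
      gcongr
      exact qd_lb hρ u v
    have step2 : (u^2 - 2*ρ*u*v + v^2)/2 ≤ (u^2 - 2*ρ*u*v + v^2)/(2*(1-ρ^2)) := by
      gcongr <;> nlinarith [hQd, hs, sq_nonneg ρ]
    have : ((1-m)*(u^2+v^2))/2 ≤ (u^2 - 2*ρ*u*v + v^2)/(2*(1-ρ^2)) := step1.trans step2
    rw [neg_div, neg_le]
    have hgoal : -(-((1-m)/2) * u^2 + -((1-m)/2) * v^2) = ((1-m)*(u^2+v^2))/2 := by ring
    rw [hgoal]; exact this
  have h0 : (0:ℝ) < Real.sqrt (1-ρ^2) := Real.sqrt_pos.2 hs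
  exact mul_le_mul hK (Real.exp_le_exp.2 hE) (Real.exp_nonneg _) (by positivity)

lemma absN_le {m ρ : ℝ} (hm : m < 1) (hρ : |ρ| ≤ m) (u v : ℝ) :
    |(ρ*u - v)*(ρ*v - u) + ρ*(1-ρ^2)| ≤ (1+2*u^2)*(1+2*v^2) := by
  have hm0 : 0 ≤ m := (abs_nonneg ρ).trans hρ
  have hρ1 : |ρ| ≤ 1 := hρ.trans hm.le
  have h1 : |ρ*u - v| ≤ |u| + |v| := by
    calc |ρ*u - v| ≤ |ρ*u| + |v| := abs_sub _ _
      _ ≤ |u| + |v| := by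
        rw [abs_mul]
        have : |ρ| * |u| ≤ 1 * |u| := by gcongr
        simpa using this
  have h2 : |ρ*v - u| ≤ |v| + |u| := by
    calc |ρ*v - u| ≤ |ρ*v| + |u| := abs_sub _ _
      _ ≤ |v| + |u| := by
        rw [abs_mul]
        have : |ρ| * |v| ≤ 1 * |v| := by gcongr
        simpa using this
  have h3 : |ρ*(1-ρ^2)| ≤ 1 := by
    rw [abs_mul]
    have hρ2 : ρ^2 ≤ 1 := by nlinarith [abs_le.mp hρ1]
    have : |1-ρ^2| ≤ 1 := by rw [abs_of_nonneg (by nlinarith)]; nlinarith [sq_nonneg ρ]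
    calc |ρ| * |1-ρ^2| ≤ 1 * 1 := by gcongr
      _ = 1 := by norm_num
  calc |(ρ*u - v)*(ρ*v - u) + ρ*(1-ρ^2)| ≤ |(ρ*u - v)*(ρ*v - u)| + |ρ*(1-ρ^2)| :=
        abs_add_le _ _
    _ ≤ (|u| + |v|) * (|v| + |u|) + 1 := by
        rw [abs_mul]
        gcongr
    _ ≤ (1+2*u^2)*(1+2*v^2) := by
        nlinarith [sq_nonneg (|u| - |v|), sq_abs u, sq_abs v, abs_nonneg u, abs_nonneg v,
          sq_nonneg (u*v), sq_nonneg (|u| * |v| - 1)]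

lemma abs_bD_le {m ρ : ℝ} (hm : m < 1) (hρ : |ρ| ≤ m) (u v : ℝ) :
    |bD ρ u v| ≤ (2*π*Real.sqrt (1-m^2))⁻¹ / (1-m^2)^2 * (gg m u * gg m v) := by
  have hm0 : 0 ≤ m := (abs_nonneg ρ).trans hρ
  have hρ2 : ρ^2 ≤ m^2 := by nlinarith [abs_le.mp hρ]
  have hsm : (0:ℝ) < 1 - m^2 := by nlinarith
  have hs : (0:ℝ) < 1 - ρ^2 := by nlinarith
  have hbf := bf_pos (by nlinarith : ρ^2 < 1) u v
  unfold bD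
  rw [abs_mul, abs_of_pos hbf, abs_div, abs_pow, abs_of_pos hs]
  calc bf ρ u v * (|(ρ*u - v)*(ρ*v - u) + ρ*(1-ρ^2)| / (1-ρ^2)^2)
      ≤ ((2*π*Real.sqrt (1-m^2))⁻¹ *
        (Real.exp (-((1-m)/2) * u^2) * Real.exp (-((1-m)/2) * v^2))) *
        (((1+2*u^2)*(1+2*v^2)) / (1-m^2)^2) := by
        apply mul_le_mul (bf_le hm hρ u v) ?_ (by positivity) (by positivity)
        gcongr
        · exact absN_le hm hρ u v
    _ = (2*π*Real.sqrt (1-m^2))⁻¹ / (1-m^2)^2 * (gg m u * gg m v) := by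
        unfold gg; ring

lemma abs_bfu_le {m ρ : ℝ} (hm : m < 1) (hρ : |ρ| ≤ m) (u v : ℝ) :
    |bfu ρ u v| ≤ (2*π*Real.sqrt (1-m^2))⁻¹ / (1-m^2) * ((1+|v|) * gg m u) := by
  have hm0 : 0 ≤ m := (abs_nonneg ρ).trans hρ
  have hρ2 : ρ^2 ≤ m^2 := by nlinarith [abs_le.mp hρ]
  have hsm : (0:ℝ) < 1 - m^2 := by nlinarith
  have hs : (0:ℝ) < 1 - ρ^2 := by nlinarith
  have hbf := bf_pos (by nlinarith : ρ^2 < 1) u v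
  unfold bfu
  rw [abs_mul, abs_of_pos hbf, abs_div, abs_of_pos hs]
  have h1 : |ρ*v - u| ≤ (1+|v|) * (1+2*u^2) := by
    have hρ1 : |ρ| ≤ 1 := hρ.trans hm.le
    calc |ρ*v - u| ≤ |ρ*v| + |u| := abs_sub _ _
      _ ≤ |v| + |u| := by
          rw [abs_mul]
          have : |ρ| * |v| ≤ 1 * |v| := by gcongr
          simpa using this
      _ ≤ (1+|v|) * (1+2*u^2) := by
          nlinarith [abs_nonneg u, abs_nonneg v, sq_abs u, sq_nonneg (|u| - 1)]
  calc bf ρ u v * (|ρ*v - u| / (1-ρ^2))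
      ≤ ((2*π*Real.sqrt (1-m^2))⁻¹ *
        (Real.exp (-((1-m)/2) * u^2) * Real.exp (-((1-m)/2) * v^2))) *
        (((1+|v|) * (1+2*u^2)) / (1-m^2)) := by
        apply mul_le_mul (bf_le hm hρ u v) ?_ (by positivity) (by positivity)
        gcongr
    _ ≤ ((2*π*Real.sqrt (1-m^2))⁻¹ *
        (Real.exp (-((1-m)/2) * u^2) * 1)) *
        (((1+|v|) * (1+2*u^2)) / (1-m^2)) := by
        gcongr
        · exact Real.exp_le_one_iff.2 (by nlinarith)
    _ = (2*π*Real.sqrt (1-m^2))⁻¹ / (1-m^2) * ((1+|v|) * gg m u) := by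
        unfold gg; ring
-- continuity facts
lemma continuous_bf_uv {ρ : ℝ} : Continuous (fun p : ℝ × ℝ => bf ρ p.1 p.2) := by
  unfold bf
  fun_prop

lemma continuous_bD_uv {ρ : ℝ} : Continuous (fun p : ℝ × ℝ => bD ρ p.1 p.2) := by
  unfold bD bf
  fun_prop

lemma continuous_bfu_u {ρ v : ℝ} : Continuous (fun u => bfu ρ u v) := by
  unfold bfu bf
  fun_prop

lemma abs_bf_le {m ρ : ℝ} (hm : m < 1) (hρ : |ρ| ≤ m) (u v : ℝ) :
    |bf ρ u v| ≤ (2*π*Real.sqrt (1-m^2))⁻¹ * (gg m u * gg m v) := by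
  have hm0 : 0 ≤ m := (abs_nonneg ρ).trans hρ
  have hsm : (0:ℝ) < 1 - m^2 := by nlinarith
  have hs : (0:ℝ) < 1 - ρ^2 := by nlinarith [abs_le.mp hρ]
  rw [abs_of_pos (bf_pos (by nlinarith) u v)]
  refine (bf_le hm hρ u v).trans ?_
  have h1 : Real.exp (-((1-m)/2) * u^2) ≤ gg m u := by
    unfold gg; nlinarith [Real.exp_pos (-((1-m)/2) * u^2), sq_nonneg u]
  have h2 : Real.exp (-((1-m)/2) * v^2) ≤ gg m v := by
    unfold gg; nlinarith [Real.exp_pos (-((1-m)/2) * v^2), sq_nonneg v]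
  have hK : (0:ℝ) ≤ (2*π*Real.sqrt (1-m^2))⁻¹ := by positivity
  gcongr <;> first
    | exact h1
    | exact h2
    | exact le_of_lt (gg_pos _)
    | exact (Real.exp_pos _).le
    | positivity

-- integrability of bf on the product of restricted measures
lemma integrable_bf_prod {m ρ : ℝ} (hm : m < 1) (hρ : |ρ| ≤ m) (c : ℝ) :
    Integrable (fun p : ℝ × ℝ => bf ρ p.1 p.2)
      ((volume.restrict (Iic c)).prod (volume.restrict (Iic c))) := by
  have hgI : Integrable (gg m) (volume.restrict (Iic c)) := (integrable_gg hm).restrict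
  have hdom := (hgI.mul_prod hgI).const_mul ((2*π*Real.sqrt (1-m^2))⁻¹)
  refine hdom.mono' continuous_bf_uv.aestronglyMeasurable ?_
  refine Filter.Eventually.of_forall fun p => ?_
  rw [Real.norm_eq_abs]
  exact (abs_bf_le hm hρ p.1 p.2).trans (le_of_eq (by ring))

lemma integrable_bD_prod {m ρ : ℝ} (hm : m < 1) (hρ : |ρ| ≤ m) (c : ℝ) :
    Integrable (fun p : ℝ × ℝ => bD ρ p.1 p.2)
      ((volume.restrict (Iic c)).prod (volume.restrict (Iic c))) := by
  have hgI : Integrable (gg m) (volume.restrict (Iic c)) := (integrable_gg hm).restrict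
  have hdom := (hgI.mul_prod hgI).const_mul ((2*π*Real.sqrt (1-m^2))⁻¹ / (1-m^2)^2)
  refine hdom.mono' continuous_bD_uv.aestronglyMeasurable ?_
  refine Filter.Eventually.of_forall fun p => ?_
  rw [Real.norm_eq_abs]
  exact (abs_bD_le hm hρ p.1 p.2).trans (le_of_eq (by ring))

-- 1D integrability of v ↦ bD ρ u v on Iic c
lemma integrable_bD_v {m ρ : ℝ} (hm : m < 1) (hρ : |ρ| ≤ m) (u c : ℝ) :
    IntegrableOn (fun v => bD ρ u v) (Iic c) := by
  have hgI : Integrable (gg m) (volume.restrict (Iic c)) := (integrable_gg hm).restrict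
  have hdom := hgI.const_mul ((2*π*Real.sqrt (1-m^2))⁻¹ / (1-m^2)^2 * gg m u)
  refine hdom.mono' ?_ ?_
  · exact (continuous_bD_uv.comp (Continuous.prodMk_right u)).aestronglyMeasurable
  refine Filter.Eventually.of_forall fun v => ?_
  rw [Real.norm_eq_abs]
  exact (abs_bD_le hm hρ u v).trans (le_of_eq (by ring))

lemma integrable_bfu_u {m ρ : ℝ} (hm : m < 1) (hρ : |ρ| ≤ m) (c : ℝ) :
    IntegrableOn (fun u => bfu ρ u c) (Iic c) := by
  have hgI : Integrable (gg m) (volume.restrict (Iic c)) := (integrable_gg hm).restrict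
  have hdom := hgI.const_mul ((2*π*Real.sqrt (1-m^2))⁻¹ / (1-m^2) * (1+|c|))
  refine hdom.mono' continuous_bfu_u.aestronglyMeasurable ?_
  refine Filter.Eventually.of_forall fun u => ?_
  rw [Real.norm_eq_abs]
  exact (abs_bfu_le hm hρ u c).trans (le_of_eq (by ring))

-- limit of bfu in v
lemma tendsto_bfu_atBot {ρ u : ℝ} (hρ : ρ^2 < 1) :
    Tendsto (fun v => bfu ρ u v) atBot (𝓝 0) := by
  have hs : (0:ℝ) < 1 - ρ^2 := by linarith
  set K := (2*π*Real.sqrt (1-ρ^2))⁻¹ with hK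
  have hβ : (0:ℝ) < 1/(2*(1-ρ^2)) := by positivity
  have := tendsto_linexp_atBot (K*ρ/(1-ρ^2)) (-(K*u/(1-ρ^2)))
    (1/(2*(1-ρ^2))) (ρ*u/(1-ρ^2)) (-(u^2/(2*(1-ρ^2)))) hβ
  refine this.congr fun v => ?_
  unfold bfu bf
  rw [show -(1/(2*(1-ρ^2)))*v^2 + (ρ*u/(1-ρ^2))*v + (-(u^2/(2*(1-ρ^2)))) =
    -(u^2 - 2*ρ*u*v + v^2) / (2*(1-ρ^2)) from by field_simp; ring]
  rw [← hK]
  ring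

lemma tendsto_bf_atBot {ρ v : ℝ} (hρ : ρ^2 < 1) :
    Tendsto (fun u => bf ρ u v) atBot (𝓝 0) := by
  have hs : (0:ℝ) < 1 - ρ^2 := by linarith
  set K := (2*π*Real.sqrt (1-ρ^2))⁻¹ with hK
  have hβ : (0:ℝ) < 1/(2*(1-ρ^2)) := by positivity
  have := tendsto_linexp_atBot 0 K
    (1/(2*(1-ρ^2))) (ρ*v/(1-ρ^2)) (-(v^2/(2*(1-ρ^2)))) hβ
  refine this.congr fun u => ?_
  unfold bf
  rw [show -(1/(2*(1-ρ^2)))*u^2 + (ρ*v/(1-ρ^2))*u + (-(v^2/(2*(1-ρ^2)))) =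
    -(u^2 - 2*ρ*u*v + v^2) / (2*(1-ρ^2)) from by field_simp; ring]
  rw [← hK]
  ring

-- inner FTC
lemma integral_bD_inner {m ρ : ℝ} (hm : m < 1) (hρ : |ρ| ≤ m) (u c : ℝ) :
    ∫ v in Iic c, bD ρ u v = bfu ρ u c := by
  have hρ2 : ρ^2 < 1 := by nlinarith [abs_le.mp hρ, (abs_nonneg ρ).trans hρ]
  have := integral_Iic_of_hasDerivAt_of_tendsto' (a := c) (m := 0)
    (fun v _ => hasDerivAt_bfu_v hρ2 u v) (integrable_bD_v hm hρ u c)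
    (tendsto_bfu_atBot hρ2)
  simpa using this

-- outer FTC
lemma integral_bfu_outer {m ρ : ℝ} (hm : m < 1) (hρ : |ρ| ≤ m) (c : ℝ) :
    ∫ u in Iic c, bfu ρ u c = bf ρ c c := by
  have hρ2 : ρ^2 < 1 := by nlinarith [abs_le.mp hρ, (abs_nonneg ρ).trans hρ]
  have := integral_Iic_of_hasDerivAt_of_tendsto' (a := c) (m := 0)
    (fun u _ => hasDerivAt_bf_u hρ2 u c) (integrable_bfu_u hm hρ c)
    (tendsto_bf_atBot hρ2)
  simpa using this

-- per-r product integral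
lemma integral_bD_prod {m ρ : ℝ} (hm : m < 1) (hρ : |ρ| ≤ m) (c : ℝ) :
    ∫ p : ℝ × ℝ, bD ρ p.1 p.2
      ∂((volume.restrict (Iic c)).prod (volume.restrict (Iic c))) = bf ρ c c := by
  rw [MeasureTheory.integral_prod _ (integrable_bD_prod hm hρ c)]
  have h1 : ∀ u : ℝ, (∫ v in Iic c, bD ρ u v) = bfu ρ u c :=
    fun u => integral_bD_inner hm hρ u c
  rw [show (fun u => ∫ v in Iic c, bD ρ u v) = fun u => bfu ρ u c from funext h1]
  exact integral_bfu_outer hm hρ c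
lemma bivCDF_eq_prod {m ρ : ℝ} (hm : m < 1) (hρ : |ρ| ≤ m) (c : ℝ) :
    bivCDF ρ c c = ∫ p : ℝ × ℝ, bf ρ p.1 p.2
      ∂((volume.restrict (Iic c)).prod (volume.restrict (Iic c))) := by
  have h0 : bivCDF ρ c c = ∫ u in Iic c, ∫ v in Iic c, bf ρ u v := rfl
  rw [h0]
  exact MeasureTheory.integral_integral (f := fun u v => bf ρ u v)
    (integrable_bf_prod hm hρ c)

lemma integrable_bD_triple {m a b c : ℝ} (hm : m < 1)
    (hI : ∀ r ∈ Ioc a b, |r| ≤ m) :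
    Integrable (Function.uncurry fun (p : ℝ × ℝ) (r : ℝ) => bD r p.1 p.2)
      (((volume.restrict (Iic c)).prod (volume.restrict (Iic c))).prod
        (volume.restrict (Ioc a b))) := by
  have hgI : Integrable (gg m) (volume.restrict (Iic c)) := (integrable_gg hm).restrict
  have hf2 : Integrable (fun p : ℝ × ℝ =>
      (2*π*Real.sqrt (1-m^2))⁻¹ / (1-m^2)^2 * (gg m p.1 * gg m p.2))
      ((volume.restrict (Iic c)).prod (volume.restrict (Iic c))) :=
    (hgI.mul_prod hgI).const_mul _
  have hone : Integrable (fun _ : ℝ => (1:ℝ)) (volume.restrict (Ioc a b)) := by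
    rw [← IntegrableOn]
    exact integrableOn_const measure_Ioc_lt_top.ne
  have hdom := hf2.mul_prod hone
  refine hdom.mono' ?_ ?_
  · apply Measurable.aestronglyMeasurable
    unfold Function.uncurry bD bf
    fun_prop
  · have hae : ∀ᵐ q : (ℝ × ℝ) × ℝ
        ∂(((volume.restrict (Iic c)).prod (volume.restrict (Iic c))).prod
          (volume.restrict (Ioc a b))), q.2 ∈ Ioc a b := by
      rw [ae_iff]
      have hset : {q : (ℝ × ℝ) × ℝ | ¬ q.2 ∈ Ioc a b} =
          (univ : Set (ℝ × ℝ)) ×ˢ (Ioc a b)ᶜ := by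
        ext q; simp
      rw [hset, Measure.prod_prod, Measure.restrict_apply measurableSet_Ioc.compl]
      simp
    filter_upwards [hae] with q hq
    rw [Function.uncurry, Real.norm_eq_abs]
    refine (abs_bD_le hm (hI q.2 hq) q.1.1 q.1.2).trans (le_of_eq (by ring))

lemma key_identity {a b c : ℝ} (ha : -1 < a) (hab : a ≤ b) (hb : b < 1) :
    bivCDF b c c - bivCDF a c c = ∫ r in a..b, bf r c c := by
  set m := max |a| |b| with hmdef
  have hm : m < 1 := by
    apply max_lt <;> rw [abs_lt] <;> constructor <;> linarith
  have hIm : ∀ r ∈ Icc a b, |r| ≤ m := by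
    intro r hr
    rw [abs_le]
    constructor
    · have h1 : -|a| ≤ a := neg_abs_le a
      have h2 : |a| ≤ m := le_max_left _ _
      linarith [hr.1]
    · have h1 : b ≤ |b| := le_abs_self b
      have h2 : |b| ≤ m := le_max_right _ _
      linarith [hr.2]
  have hma : |a| ≤ m := le_max_left _ _
  have hmb : |b| ≤ m := le_max_right _ _
  rw [bivCDF_eq_prod hm hmb c, bivCDF_eq_prod hm hma c,
    ← integral_sub (integrable_bf_prod hm hmb c) (integrable_bf_prod hm hma c)]
  have hpt : ∀ p : ℝ × ℝ, bf b p.1 p.2 - bf a p.1 p.2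
      = ∫ r in Ioc a b, bD r p.1 p.2 := by
    intro p
    rw [← intervalIntegral.integral_of_le hab]
    symm
    apply intervalIntegral.integral_eq_sub_of_hasDerivAt
    · intro r hr
      rw [uIcc_of_le hab] at hr
      have h1 := hIm r hr
      have : r^2 < 1 := by nlinarith [abs_le.mp h1, (abs_nonneg r).trans h1]
      exact hasDerivAt_bf_rho this p.1 p.2
    · apply ContinuousOn.intervalIntegrable
      intro r hr
      rw [uIcc_of_le hab] at hr
      have h1 := hIm r hr
      have hr2 : r^2 < 1 := by nlinarith [abs_le.mp h1, (abs_nonneg r).trans h1]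
      have hc1 : ContinuousAt (fun r => bf r p.1 p.2) r :=
        (hasDerivAt_bf_rho hr2 p.1 p.2).continuousAt
      have hc2 : ContinuousAt
          (fun r : ℝ => ((r*p.1 - p.2)*(r*p.2 - p.1) + r*(1-r^2))/(1-r^2)^2) r := by
        apply ContinuousAt.div
        · fun_prop
        · fun_prop
        · have : (0:ℝ) < 1 - r^2 := by linarith
          positivity
      exact ContinuousAt.continuousWithinAt (by exact hc1.mul hc2)
  simp_rw [hpt]
  rw [MeasureTheory.integral_integral_swap
    (integrable_bD_triple hm (fun r hr => hIm r (Ioc_subset_Icc_self hr)))]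
  rw [intervalIntegral.integral_of_le hab]
  apply setIntegral_congr_fun measurableSet_Ioc
  intro r hr
  exact integral_bD_prod hm (hIm r (Ioc_subset_Icc_self hr)) c
lemma stdCDF_zero : stdCDF 0 = 1/2 := by
  have hint : Integrable (fun t : ℝ => Real.exp (-t^2/2)) := by
    have h := integrable_exp_neg_mul_sq (by norm_num : (0:ℝ) < 1/2)
    exact h.congr (Filter.Eventually.of_forall fun x => by ring_nf)
  have htot : ∫ t : ℝ, Real.exp (-t^2/2) = Real.sqrt (2*π) := by
    have h := integral_gaussian (1/2)
    simp_rw [show ∀ t : ℝ, -t^2/2 = -(1/2)*t^2 from fun t => by ring]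
    rw [h]
    congr 1
    ring
  have hsym : ∫ t in Iic (0:ℝ), Real.exp (-t^2/2)
      = ∫ t in Ioi (0:ℝ), Real.exp (-t^2/2) := by
    have h1 : ∫ t in Iic (0:ℝ), Real.exp (-t^2/2)
        = ∫ t in Iic (0:ℝ), Real.exp (-(-t)^2/2) := by simp
    have h2 := integral_comp_neg_Iic (0:ℝ) (fun t : ℝ => Real.exp (-t^2/2))
    rw [neg_zero] at h2
    rw [h1, h2]
  have hsplit := integral_add_compl (measurableSet_Iic : MeasurableSet (Iic (0:ℝ))) hint
  rw [compl_Iic] at hsplit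
  have hIic : ∫ t in Iic (0:ℝ), Real.exp (-t^2/2) = Real.sqrt (2*π) / 2 := by
    rw [htot] at hsplit
    linarith [hsym, hsplit]
  have h2π : (0:ℝ) < Real.sqrt (2*π) := Real.sqrt_pos.2 (by positivity)
  unfold stdCDF
  rw [MeasureTheory.integral_const_mul]
  rw [show (fun t : ℝ => Real.exp (-t ^ 2 / 2)) = fun t : ℝ => Real.exp (-t^2/2) from rfl]
  rw [hIic]
  field_simp
lemma bf_diag {r : ℝ} (hr2 : r^2 < 1) (c : ℝ) :
    bf r c c = (2*π*Real.sqrt (1-r^2))⁻¹ * Real.exp (-c^2/(1+r)) := by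
  have hr : -1 < r := by nlinarith
  have hr' : r < 1 := by nlinarith
  have h1 : (1:ℝ) + r ≠ 0 := by linarith
  have h2 : (1:ℝ) - r^2 ≠ 0 := by nlinarith
  unfold bf
  congr 2
  field_simp
  ring

/-- For fixed `α ∈ (0,1)` and `c = c_{α/2}` the upper `α/2` standard normal
quantile, the joint rejection probability
`Q(ρ) = 4 − 8Φ(c) + 2Φ_ρ(c,c) + 2Φ_{−ρ}(c,c)` is strictly increasing on `(0, 1)`. -/
theorem statement4
    (α : ℝ) (hα : α ∈ Set.Ioo (0 : ℝ) 1)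
    (c : ℝ) (hc : 2 * (1 - stdCDF c) = α)
    (Q : ℝ → ℝ)
    (hQ : Q = fun ρ => 4 - 8 * stdCDF c + 2 * bivCDF ρ c c + 2 * bivCDF (-ρ) c c)
    (ρ₁ ρ₂ : ℝ) (h1 : 0 < ρ₁) (h12 : ρ₁ < ρ₂) (h2 : ρ₂ < 1) :
    Q ρ₁ < Q ρ₂ := by
  have hc0 : c ≠ 0 := by
    intro h
    rw [h, stdCDF_zero] at hc
    norm_num at hc
    linarith [hα.2]
  have hc2 : 0 < c^2 := by positivity
  have key1 : bivCDF ρ₂ c c - bivCDF ρ₁ c c = ∫ r in ρ₁..ρ₂, bf r c c :=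
    key_identity (by linarith) h12.le h2 (c := c)
  have key2 : bivCDF (-ρ₁) c c - bivCDF (-ρ₂) c c = ∫ r in (-ρ₂)..(-ρ₁), bf r c c :=
    key_identity (by linarith) (by linarith) (by linarith) (c := c)
  have hneg : ∫ r in (-ρ₂)..(-ρ₁), bf r c c = ∫ r in ρ₁..ρ₂, bf (-r) c c :=
    (intervalIntegral.integral_comp_neg (a := ρ₁) (b := ρ₂) (fun r => bf r c c)).symm
  have hx2 : ∀ x ∈ uIcc ρ₁ ρ₂, x^2 < 1 := by
    intro x hx
    rw [uIcc_of_le h12.le] at hx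
    nlinarith [hx.1, hx.2]
  have hInt1 : IntervalIntegrable (fun r => bf r c c) volume ρ₁ ρ₂ := by
    apply ContinuousOn.intervalIntegrable
    intro r hr
    exact (hasDerivAt_bf_rho (hx2 r hr) c c).continuousAt.continuousWithinAt
  have hInt2 : IntervalIntegrable (fun r => bf (-r) c c) volume ρ₁ ρ₂ := by
    apply ContinuousOn.intervalIntegrable
    intro r hr
    have hr2 : (-r)^2 < 1 := by rw [neg_sq]; exact hx2 r hr
    exact ((hasDerivAt_bf_rho hr2 c c).continuousAt.comp
      (continuous_neg.continuousAt)).continuousWithinAt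
  have hpos : 0 < ∫ r in ρ₁..ρ₂, (bf r c c - bf (-r) c c) := by
    apply intervalIntegral.intervalIntegral_pos_of_pos_on (hInt1.sub hInt2) ?_ h12
    intro x hx
    have hxx : x^2 < 1 := by nlinarith [hx.1, hx.2]
    have hxx' : (-x)^2 < 1 := by rw [neg_sq]; exact hxx
    have hx0 : 0 < x := lt_trans h1 hx.1
    have hx1 : x < 1 := lt_trans hx.2 h2
    rw [bf_diag hxx, bf_diag hxx', neg_sq, sub_pos]
    have hK : (0:ℝ) < (2*π*Real.sqrt (1-x^2))⁻¹ := by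
      have : (0:ℝ) < 1 - x^2 := by linarith
      have := Real.sqrt_pos.2 this
      positivity
    have hexp : Real.exp (-c^2/(1+(-x))) < Real.exp (-c^2/(1+x)) := by
      rw [Real.exp_lt_exp]
      have harg : c^2/(1+x) < c^2/(1+(-x)) := by
        apply div_lt_div_of_pos_left hc2 (by linarith)
        linarith
      rw [neg_div, neg_div]
      linarith
    exact mul_lt_mul_of_pos_left hexp hK
  have e1 : ∫ r in ρ₁..ρ₂, (bf r c c - bf (-r) c c)
      = (∫ r in ρ₁..ρ₂, bf r c c) - ∫ r in ρ₁..ρ₂, bf (-r) c c :=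
    intervalIntegral.integral_sub hInt1 hInt2
  rw [hQ]
  simp only
  linarith [key1, key2, hneg, hpos, e1]
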